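/- arXiv:2207.04485 — 4 statements merged into one kernel-verified Lean document; each statement's English description precedes it below -/
import Mathlib

section
/- Let d ≥ 1, s ≤ 0, σ ∈ ℝ, ε₀ > 0, and let φ be a Schwartz function on ℝ^d whose Fourier transform is supported in {ξ ∈ ℝ^d : |ξ|₁ ≥ ε₀}, where |ξ|₁ = |ξ₁| + … + |ξ_d|. For λ > 1 let D_λφ(x) := φ(λx). Then: if σ ≤ 0, ‖D_λφ‖_{E^s_σ} ≤ λ^{−d/2} 2^{s(λ−1)ε₀} ‖φ‖_{E^s_σ}; and if σ > 0, ‖D_λφ‖_{E^s_σ} ≤ λ^{−d/2+σ} 2^{s(λ−1)ε₀} ‖φ‖_{E^s_σ}. -/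
open MeasureTheory Real FourierTransform
open scoped RealInnerProductSpace

/-- The `E^s_σ` norm on `ℝ^d`:
`‖φ‖_{E^s_σ} = (∫ ⟨ξ⟩^{2σ} 2^{2s|ξ|₁} |𝓕φ(ξ)|² dξ)^{1/2}`, where `|ξ|₁ = ∑ |ξᵢ|`
and `⟨ξ⟩^{2σ} = (1+‖ξ‖²)^σ`. -/
noncomputable def Enorm (d : ℕ) (s σ : ℝ) (f : EuclideanSpace ℝ (Fin d) → ℂ) : ℝ :=
  (∫ ξ : EuclideanSpace ℝ (Fin d),
    (1 + ‖ξ‖ ^ 2) ^ σ * (2 : ℝ) ^ (2 * s * ∑ i, |ξ i|) * ‖𝓕 f ξ‖ ^ 2) ^ (1 / 2 : ℝ)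

lemma fourier_dilate {d : ℕ} (f : EuclideanSpace ℝ (Fin d) → ℂ) {lam : ℝ} (hlam : 0 < lam)
    (ξ : EuclideanSpace ℝ (Fin d)) :
    𝓕 (fun x => f (lam • x)) ξ = ((lam ^ d)⁻¹ : ℝ) • 𝓕 f (lam⁻¹ • ξ) := by
  rw [Real.fourier_eq, Real.fourier_eq]
  have h1 : ∀ v : EuclideanSpace ℝ (Fin d),
      𝐞 (-⟪v, ξ⟫) • f (lam • v)
        = (fun y => 𝐞 (-⟪y, lam⁻¹ • ξ⟫) • f y) (lam • v) := by
    intro v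
    simp only
    congr 2
    rw [real_inner_smul_left, real_inner_smul_right, ← mul_assoc,
      mul_inv_cancel₀ hlam.ne', one_mul]
  calc (∫ v, 𝐞 (-⟪v, ξ⟫) • f (lam • v))
      = ∫ v, (fun y => 𝐞 (-⟪y, lam⁻¹ • ξ⟫) • f y) (lam • v) := by
        exact integral_congr_ae (Filter.Eventually.of_forall h1)
    _ = |((lam ^ (Module.finrank ℝ (EuclideanSpace ℝ (Fin d))))⁻¹)| •
          ∫ y, 𝐞 (-⟪y, lam⁻¹ • ξ⟫) • f y :=
        MeasureTheory.Measure.integral_comp_smul volume (fun y => 𝐞 (-⟪y, lam⁻¹ • ξ⟫) • f y) lam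
    _ = ((lam ^ d)⁻¹ : ℝ) • ∫ y, 𝐞 (-⟪y, lam⁻¹ • ξ⟫) • f y := by
        rw [finrank_euclideanSpace_fin, abs_of_nonneg (by positivity)]
lemma integrable_weight (d : ℕ) {s : ℝ} (σ : ℝ) (hs : s ≤ 0)
    (g : SchwartzMap (EuclideanSpace ℝ (Fin d)) ℂ) :
    Integrable (fun ξ : EuclideanSpace ℝ (Fin d) =>
      (1 + ‖ξ‖ ^ 2) ^ σ * (2 : ℝ) ^ (2 * s * ∑ i, |ξ i|) * ‖g ξ‖ ^ 2) := by
  set k : ℕ := ⌈σ⌉₊ with hkdef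
  set M : ℕ := 2 * k + d + 1 with hMdef
  set B : ℝ := (2 ^ M * (Finset.Iic (M, 0)).sup (fun p => SchwartzMap.seminorm ℝ p.1 p.2) g)
      * (SchwartzMap.seminorm ℝ 0 0) g with hBdef
  have hB : 0 ≤ B := by positivity
  have hint : Integrable (fun ξ : EuclideanSpace ℝ (Fin d) =>
      B * (1 + ‖ξ‖) ^ (-(d + 1 : ℝ))) := by
    refine (integrable_one_add_norm ?_).const_mul B
    rw [finrank_euclideanSpace_fin]; linarith
  refine hint.mono' ?_ (Filter.Eventually.of_forall fun ξ => ?_)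
  · apply Continuous.aestronglyMeasurable
    refine Continuous.mul (Continuous.mul ?_ ?_) ((g.continuous.norm).pow 2)
    · exact (continuous_const.add (continuous_norm.pow 2)).rpow_const
        (fun x => Or.inl (by simp only [Pi.add_apply, Pi.pow_apply]; positivity))
    · refine continuous_const.rpow ?_ (fun x => Or.inl two_ne_zero)
      exact continuous_const.mul (continuous_finset_sum _ fun i _ =>
        ((EuclideanSpace.proj (𝕜 := ℝ) i).continuous).abs)
  · set a : ℝ := 1 + ‖ξ‖ with hadef
    have ha : 1 ≤ a := le_add_of_nonneg_right (norm_nonneg ξ)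
    have ha0 : 0 < a := lt_of_lt_of_le one_pos ha
    have hnn : 0 ≤ (1 + ‖ξ‖ ^ 2) ^ σ * (2 : ℝ) ^ (2 * s * ∑ i, |ξ i|) * ‖g ξ‖ ^ 2 := by
      positivity
    rw [Real.norm_of_nonneg hnn]
    have h1 : (1 + ‖ξ‖ ^ 2) ^ σ ≤ a ^ (2 * k) := by
      calc (1 + ‖ξ‖ ^ 2) ^ σ ≤ (1 + ‖ξ‖ ^ 2) ^ (k : ℝ) :=
            rpow_le_rpow_of_exponent_le (le_add_of_nonneg_right (by positivity)) (Nat.le_ceil σ)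
        _ = (1 + ‖ξ‖ ^ 2) ^ (k : ℕ) := by rw [rpow_natCast]
        _ ≤ (a ^ 2) ^ (k : ℕ) := by
            apply pow_le_pow_left₀ (by positivity)
            rw [hadef]; nlinarith [norm_nonneg ξ]
        _ = a ^ (2 * k) := by rw [← pow_mul]
    have h2 : (2 : ℝ) ^ (2 * s * ∑ i, |ξ i|) ≤ 1 := by
      apply rpow_le_one_of_one_le_of_nonpos one_le_two
      apply mul_nonpos_of_nonpos_of_nonneg (by linarith)
      exact Finset.sum_nonneg fun i _ => abs_nonneg _
    have key : a ^ (2 * k) = a ^ (-(d + 1 : ℝ)) * a ^ (M : ℕ) := by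
      rw [← rpow_natCast a (2 * k), ← rpow_natCast a M, ← rpow_add ha0]
      congr 1
      rw [hMdef]; push_cast; ring
    have hsem1 : a ^ (M : ℕ) * ‖g ξ‖ ≤
        2 ^ M * (Finset.Iic (M, 0)).sup (fun p => SchwartzMap.seminorm ℝ p.1 p.2) g := by
      have := SchwartzMap.one_add_le_sup_seminorm_apply (𝕜 := ℝ) (m := (M, 0))
        (le_refl M) (le_refl 0) g ξ
      simpa [norm_iteratedFDeriv_zero] using this
    have hsem2 : ‖g ξ‖ ≤ (SchwartzMap.seminorm ℝ 0 0) g := SchwartzMap.norm_le_seminorm ℝ g ξ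
    calc (1 + ‖ξ‖ ^ 2) ^ σ * (2 : ℝ) ^ (2 * s * ∑ i, |ξ i|) * ‖g ξ‖ ^ 2
        ≤ a ^ (2 * k) * 1 * ‖g ξ‖ ^ 2 := by
          apply mul_le_mul (mul_le_mul h1 h2 (by positivity) (by positivity)) le_rfl
            (by positivity) (by positivity)
      _ = a ^ (-(d + 1 : ℝ)) * ((a ^ (M : ℕ) * ‖g ξ‖) * ‖g ξ‖) := by
          rw [key]; ring
      _ ≤ a ^ (-(d + 1 : ℝ)) * (B) := by
          apply mul_le_mul_of_nonneg_left _ (by positivity)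
          rw [hBdef]
          exact mul_le_mul hsem1 hsem2 (norm_nonneg _) (by positivity)
      _ = B * (1 + ‖ξ‖) ^ (-(d + 1 : ℝ)) := by rw [hadef]; ring
lemma pointwise_bound {d : ℕ} {s σ ε₀ lam K : ℝ} (hs : s ≤ 0) (hlam : 1 < lam)
    (hK : 0 ≤ K)
    (hKw : ∀ t : ℝ, 0 ≤ t → (1 + lam ^ 2 * t) ^ σ ≤ K * (1 + t) ^ σ)
    (φ : SchwartzMap (EuclideanSpace ℝ (Fin d)) ℂ)
    (hsupp : Function.support (𝓕 ⇑φ) ⊆ {ξ : EuclideanSpace ℝ (Fin d) | ε₀ ≤ ∑ i, |ξ i|})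
    (η : EuclideanSpace ℝ (Fin d)) :
    (1 + ‖lam • η‖ ^ 2) ^ σ * (2 : ℝ) ^ (2 * s * ∑ i, |(lam • η) i|) * ‖𝓕 ⇑φ η‖ ^ 2 ≤
      K * (2 : ℝ) ^ (2 * s * (lam - 1) * ε₀) *
        ((1 + ‖η‖ ^ 2) ^ σ * (2 : ℝ) ^ (2 * s * ∑ i, |η i|) * ‖𝓕 ⇑φ η‖ ^ 2) := by
  have hlam0 : 0 < lam := lt_trans one_pos hlam
  by_cases h : 𝓕 ⇑φ η = 0
  · simp [h]
  · have hA : ε₀ ≤ ∑ i, |η i| := hsupp (by simpa [Function.mem_support] using h)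
    set A : ℝ := ∑ i, |η i| with hAdef
    have hnorm : ‖lam • η‖ ^ 2 = lam ^ 2 * ‖η‖ ^ 2 := by
      rw [norm_smul, Real.norm_eq_abs, abs_of_pos hlam0, mul_pow]
    have hsum : ∑ i, |(lam • η) i| = lam * A := by
      rw [hAdef, Finset.mul_sum]
      congr 1; ext i
      simp [PiLp.smul_apply, smul_eq_mul, abs_mul, abs_of_pos hlam0]
    have h1 : (1 + ‖lam • η‖ ^ 2) ^ σ ≤ K * (1 + ‖η‖ ^ 2) ^ σ := by
      rw [hnorm]; exact hKw _ (by positivity)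
    have h2 : (2 : ℝ) ^ (2 * s * ∑ i, |(lam • η) i|) ≤
        (2 : ℝ) ^ (2 * s * (lam - 1) * ε₀) * (2 : ℝ) ^ (2 * s * A) := by
      rw [hsum, ← rpow_add two_pos]
      apply rpow_le_rpow_of_exponent_le one_le_two
      have hc : 2 * s * (lam - 1) ≤ 0 :=
        mul_nonpos_of_nonpos_of_nonneg (by linarith) (by linarith)
      nlinarith [mul_le_mul_of_nonpos_left hA hc]
    calc (1 + ‖lam • η‖ ^ 2) ^ σ * (2 : ℝ) ^ (2 * s * ∑ i, |(lam • η) i|) * ‖𝓕 ⇑φ η‖ ^ 2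
        ≤ (K * (1 + ‖η‖ ^ 2) ^ σ) *
            ((2 : ℝ) ^ (2 * s * (lam - 1) * ε₀) * (2 : ℝ) ^ (2 * s * A)) * ‖𝓕 ⇑φ η‖ ^ 2 := by
          apply mul_le_mul (mul_le_mul h1 h2 (by positivity) ?_) le_rfl (by positivity) ?_
          · positivity
          · positivity
      _ = K * (2 : ℝ) ^ (2 * s * (lam - 1) * ε₀) *
          ((1 + ‖η‖ ^ 2) ^ σ * (2 : ℝ) ^ (2 * s * A) * ‖𝓕 ⇑φ η‖ ^ 2) := by ring
lemma main_bound (d : ℕ) (s σ ε₀ : ℝ) (hs : s ≤ 0) (hε : 0 < ε₀)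
    (φ : SchwartzMap (EuclideanSpace ℝ (Fin d)) ℂ)
    (hsupp : Function.support (𝓕 ⇑φ) ⊆ {ξ : EuclideanSpace ℝ (Fin d) | ε₀ ≤ ∑ i, |ξ i|})
    (lam : ℝ) (hlam : 1 < lam) (K : ℝ) (hK : 0 ≤ K)
    (hKw : ∀ t : ℝ, 0 ≤ t → (1 + lam ^ 2 * t) ^ σ ≤ K * (1 + t) ^ σ) :
    Enorm d s σ (fun x => φ (lam • x)) ≤
      ((lam ^ d)⁻¹) ^ (1 / 2 : ℝ) * K ^ (1 / 2 : ℝ) * (2 : ℝ) ^ (s * (lam - 1) * ε₀) *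
        Enorm d s σ ⇑φ := by
  have hlam0 : 0 < lam := lt_trans one_pos hlam
  have hld : (0 : ℝ) < lam ^ d := by positivity
  set g : EuclideanSpace ℝ (Fin d) → ℂ := 𝓕 ⇑φ with hgdef
  set I : ℝ := ∫ ξ : EuclideanSpace ℝ (Fin d),
      (1 + ‖ξ‖ ^ 2) ^ σ * (2 : ℝ) ^ (2 * s * ∑ i, |ξ i|) * ‖g ξ‖ ^ 2 with hIdef
  set J : ℝ := ∫ η : EuclideanSpace ℝ (Fin d),
      (1 + ‖lam • η‖ ^ 2) ^ σ * (2 : ℝ) ^ (2 * s * ∑ i, |(lam • η) i|) * ‖g η‖ ^ 2 with hJdef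
  have hI0 : 0 ≤ I := integral_nonneg fun ξ => by positivity
  have hJ0 : 0 ≤ J := integral_nonneg fun η => by positivity
  -- Step 1: rewrite the dilated Enorm integral
  have step1 : Enorm d s σ (fun x => φ (lam • x)) =
      (((lam ^ d)⁻¹) ^ 2 * ∫ ξ : EuclideanSpace ℝ (Fin d),
        (1 + ‖ξ‖ ^ 2) ^ σ * (2 : ℝ) ^ (2 * s * ∑ i, |ξ i|) * ‖g (lam⁻¹ • ξ)‖ ^ 2) ^ (1 / 2 : ℝ) := by
    rw [Enorm]
    congr 1
    rw [← integral_const_mul]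
    apply integral_congr_ae
    filter_upwards with ξ
    rw [fourier_dilate ⇑φ hlam0 ξ, norm_smul]
    simp only [Real.norm_eq_abs, abs_of_nonneg (inv_nonneg.2 hld.le)]
    rw [mul_pow, ← hgdef]
    ring
  -- Step 2: change of variables
  have step2 : (∫ ξ : EuclideanSpace ℝ (Fin d),
      (1 + ‖ξ‖ ^ 2) ^ σ * (2 : ℝ) ^ (2 * s * ∑ i, |ξ i|) * ‖g (lam⁻¹ • ξ)‖ ^ 2) = lam ^ d * J := by
    have h := MeasureTheory.Measure.integral_comp_inv_smul_of_nonneg volume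
      (fun η : EuclideanSpace ℝ (Fin d) =>
        (1 + ‖lam • η‖ ^ 2) ^ σ * (2 : ℝ) ^ (2 * s * ∑ i, |(lam • η) i|) * ‖g η‖ ^ 2) hlam0.le
    simp only [smul_inv_smul₀ hlam0.ne', finrank_euclideanSpace_fin, smul_eq_mul] at h
    rw [← hJdef] at h
    rw [← h]
  -- Step 3: comparison
  have step3 : J ≤ K * (2 : ℝ) ^ (2 * s * (lam - 1) * ε₀) * I := by
    have hIw : Integrable (fun ξ : EuclideanSpace ℝ (Fin d) =>
        (1 + ‖ξ‖ ^ 2) ^ σ * (2 : ℝ) ^ (2 * s * ∑ i, |ξ i|) * ‖g ξ‖ ^ 2) := by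
      have h := integrable_weight d σ hs (SchwartzMap.fourierTransformCLM ℝ φ)
      simpa [hgdef, SchwartzMap.fourier_coe] using h
    rw [hJdef, hIdef, ← integral_const_mul]
    apply integral_mono_of_nonneg
    · filter_upwards with η; positivity
    · exact hIw.const_mul _
    · filter_upwards with η
      exact pointwise_bound hs hlam hK hKw φ hsupp η
  -- Combine
  have hC0 : 0 ≤ K * (2 : ℝ) ^ (2 * s * (lam - 1) * ε₀) := by positivity
  have hle : ((lam ^ d)⁻¹) ^ 2 * (lam ^ d * J) ≤
      (lam ^ d)⁻¹ * (K * (2 : ℝ) ^ (2 * s * (lam - 1) * ε₀) * I) := by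
    have heq : ((lam ^ d)⁻¹) ^ 2 * (lam ^ d * J) = (lam ^ d)⁻¹ * J := by
      field_simp
    rw [heq]
    exact mul_le_mul_of_nonneg_left step3 (inv_nonneg.2 hld.le)
  rw [step1, step2]
  calc (((lam ^ d)⁻¹) ^ 2 * (lam ^ d * J)) ^ (1 / 2 : ℝ)
      ≤ ((lam ^ d)⁻¹ * (K * (2 : ℝ) ^ (2 * s * (lam - 1) * ε₀) * I)) ^ (1 / 2 : ℝ) := by
        apply rpow_le_rpow _ hle (by norm_num)
        positivity
    _ = ((lam ^ d)⁻¹) ^ (1 / 2 : ℝ) * K ^ (1 / 2 : ℝ) * (2 : ℝ) ^ (s * (lam - 1) * ε₀) *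
          I ^ (1 / 2 : ℝ) := by
        rw [mul_rpow (by positivity) (by positivity),
          mul_rpow (by positivity) hI0, mul_rpow hK (by positivity),
          ← Real.rpow_mul (by norm_num : (0:ℝ) ≤ 2)]
        ring_nf
    _ = ((lam ^ d)⁻¹) ^ (1 / 2 : ℝ) * K ^ (1 / 2 : ℝ) * (2 : ℝ) ^ (s * (lam - 1) * ε₀) *
          Enorm d s σ ⇑φ := by rw [Enorm, ← hgdef, ← hIdef]
/-- Scaling estimate for `D_λφ(x) = φ(λx)`, `λ > 1`, for Schwartz `φ` whose Fourier transform is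
supported in `{|ξ|₁ ≥ ε₀}`: if `σ ≤ 0` then `‖D_λφ‖_{E^s_σ} ≤ λ^{-d/2} 2^{s(λ-1)ε₀} ‖φ‖_{E^s_σ}`,
and if `σ > 0` then `‖D_λφ‖_{E^s_σ} ≤ λ^{-d/2+σ} 2^{s(λ-1)ε₀} ‖φ‖_{E^s_σ}`. -/
theorem stmt_1 (d : ℕ) (hd : 1 ≤ d) (s σ ε₀ : ℝ) (hs : s ≤ 0) (hε : 0 < ε₀)
    (φ : SchwartzMap (EuclideanSpace ℝ (Fin d)) ℂ)
    (hsupp : Function.support (𝓕 ⇑φ) ⊆ {ξ : EuclideanSpace ℝ (Fin d) | ε₀ ≤ ∑ i, |ξ i|})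
    (lam : ℝ) (hlam : 1 < lam) :
    (σ ≤ 0 → Enorm d s σ (fun x => φ (lam • x)) ≤
      lam ^ (-(d : ℝ) / 2) * (2 : ℝ) ^ (s * (lam - 1) * ε₀) * Enorm d s σ ⇑φ) ∧
    (0 < σ → Enorm d s σ (fun x => φ (lam • x)) ≤
      lam ^ (-(d : ℝ) / 2 + σ) * (2 : ℝ) ^ (s * (lam - 1) * ε₀) * Enorm d s σ ⇑φ) := by
  have hlam0 : 0 < lam := lt_trans one_pos hlam
  have hlamsq : 1 ≤ lam ^ 2 := by nlinarith
  have h_pow : ((lam ^ d)⁻¹ : ℝ) ^ (1 / 2 : ℝ) = lam ^ (-(d : ℝ) / 2) := by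
    rw [← Real.rpow_natCast lam d, ← Real.rpow_neg hlam0.le, ← Real.rpow_mul hlam0.le]
    congr 1; ring
  constructor
  · intro hσ
    have h := main_bound d s σ ε₀ hs hε φ hsupp lam hlam 1 zero_le_one ?_
    · rw [h_pow, Real.one_rpow, mul_one] at h
      exact h
    · intro t ht
      rw [one_mul]
      exact Real.rpow_le_rpow_of_nonpos (by positivity) (by nlinarith) hσ
  · intro hσ
    have h := main_bound d s σ ε₀ hs hε φ hsupp lam hlam (lam ^ (2 * σ))
      (Real.rpow_nonneg hlam0.le _) ?_
    · have hK12 : (lam ^ (2 * σ)) ^ (1 / 2 : ℝ) = lam ^ σ := by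
        rw [← Real.rpow_mul hlam0.le]
        congr 1; ring
      have hsplit : lam ^ (-(d : ℝ) / 2 + σ) = lam ^ (-(d : ℝ) / 2) * lam ^ σ :=
        Real.rpow_add hlam0 _ _
      rw [h_pow, hK12] at h
      rw [hsplit]
      calc Enorm d s σ (fun x => φ (lam • x))
          ≤ lam ^ (-(d : ℝ) / 2) * lam ^ σ * (2 : ℝ) ^ (s * (lam - 1) * ε₀) *
              Enorm d s σ ⇑φ := h
        _ = lam ^ (-(d : ℝ) / 2) * lam ^ σ * (2 : ℝ) ^ (s * (lam - 1) * ε₀) *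
              Enorm d s σ ⇑φ := rfl
    · intro t ht
      have h1 : 1 + lam ^ 2 * t ≤ lam ^ 2 * (1 + t) := by nlinarith
      calc (1 + lam ^ 2 * t) ^ σ ≤ (lam ^ 2 * (1 + t)) ^ σ :=
            Real.rpow_le_rpow (by positivity) h1 hσ.le
        _ = lam ^ (2 * σ) * (1 + t) ^ σ := by
            rw [Real.mul_rpow (by positivity) (by positivity), ← Real.rpow_natCast lam 2,
              ← Real.rpow_mul hlam0.le]
            norm_num
end

section
/- Let d ≥ 1, s ≤ 0, σ ∈ ℝ, and let φ be a Schwartz function on ℝ^d. For 0 < μ < 1 let D_μφ(x) := φ(μx). Then: if σ ≤ 0, ‖D_μφ‖_{E^{s/μ}_σ} ≤ μ^{−d/2+σ} ‖φ‖_{E^s_σ}; and if σ > 0, ‖D_μφ‖_{E^{s/μ}_σ} ≤ μ^{−d/2} ‖φ‖_{E^s_σ}. -/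
open MeasureTheory Real FourierTransform

lemma ft_dilate {d : ℕ} (f : EuclideanSpace ℝ (Fin d) → ℂ) {μ : ℝ} (hμ : 0 < μ)
    (ξ : EuclideanSpace ℝ (Fin d)) :
    𝓕 (fun x => f (μ • x)) ξ = ((μ ^ d)⁻¹ : ℝ) • 𝓕 f (μ⁻¹ • ξ) := by
  rw [Real.fourier_eq, Real.fourier_eq]
  have h : ∀ x : EuclideanSpace ℝ (Fin d),
      𝐞 (-(inner ℝ x ξ : ℝ)) • f (μ • x)
        = (fun v => 𝐞 (-(inner ℝ v (μ⁻¹ • ξ) : ℝ)) • f v) (μ • x) := by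
    intro x
    simp only [real_inner_smul_left, real_inner_smul_right]
    rw [inv_mul_cancel_left₀ hμ.ne']
  simp_rw [h]
  rw [Measure.integral_comp_smul_of_nonneg volume
      (fun v => 𝐞 (-(inner ℝ v (μ⁻¹ • ξ) : ℝ)) • f v) μ (hR := hμ.le),
    finrank_euclideanSpace, Fintype.card_fin]

lemma integrable_G {d : ℕ} (s σ : ℝ) (hs : s ≤ 0)
    (ψ : SchwartzMap (EuclideanSpace ℝ (Fin d)) ℂ) :
    Integrable (fun ξ : EuclideanSpace ℝ (Fin d) =>
      (1 + ‖ξ‖ ^ 2) ^ σ * (2 : ℝ) ^ (2 * s * ∑ i, |ξ i|) * ‖ψ ξ‖ ^ 2) := by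
  set n : ℕ := ⌈σ⌉₊ with hn
  set C : ℝ := SchwartzMap.seminorm ℝ 0 0 ψ with hC
  have hC0 : 0 ≤ C := apply_nonneg _ _
  have hbd : ∀ x, ‖ψ x‖ ≤ C := fun x => ψ.norm_le_seminorm ℝ x
  have hψ0 : ∀ x, 0 ≤ ‖ψ x‖ := fun x => norm_nonneg _
  -- dominating function
  have hint : Integrable (fun x : EuclideanSpace ℝ (Fin d) =>
      (2 : ℝ) ^ n * C * (‖ψ x‖ + ‖x‖ ^ (2 * n) * ‖ψ x‖)) := by
    exact (ψ.integrable.norm.add (ψ.integrable_pow_mul volume (2 * n))).const_mul _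
  refine hint.mono' ?_ (Filter.Eventually.of_forall fun x => ?_)
  · -- measurability
    apply Continuous.aestronglyMeasurable
    apply Continuous.mul
    apply Continuous.mul
    · apply Continuous.rpow_const (by continuity)
      intro x
      left
      positivity
    · exact Continuous.rpow continuous_const
        (continuous_const.mul (continuous_finset_sum _ fun i _ => (PiLp.continuous_apply 2 _ i).abs))
        (fun x => Or.inl two_ne_zero)
    · exact (ψ.continuous.norm.pow 2)
  · have h1 : (0:ℝ) ≤ 1 + ‖x‖ ^ 2 := by positivity
    have hone : (1:ℝ) ≤ 1 + ‖x‖ ^ 2 := le_add_of_nonneg_right (by positivity)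
    have hw : (2 : ℝ) ^ (2 * s * ∑ i, |x i|) ≤ 1 := by
      apply Real.rpow_le_one_of_one_le_of_nonpos one_le_two
      have hsum : 0 ≤ ∑ i, |x i| := Finset.sum_nonneg fun i _ => abs_nonneg _
      have := mul_nonneg (by norm_num : (0:ℝ) ≤ 2) hsum
      nlinarith
    have hw0 : (0:ℝ) ≤ (2 : ℝ) ^ (2 * s * ∑ i, |x i|) := Real.rpow_nonneg (by norm_num) _
    have hrn : (1 + ‖x‖ ^ 2) ^ σ ≤ (2:ℝ) ^ n * (1 + ‖x‖ ^ (2 * n)) := by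
      calc (1 + ‖x‖ ^ 2) ^ σ ≤ (1 + ‖x‖ ^ 2) ^ (n : ℝ) :=
            Real.rpow_le_rpow_of_exponent_le hone (Nat.le_ceil σ)
        _ = (1 + ‖x‖ ^ 2) ^ n := by rw [Real.rpow_natCast]
        _ ≤ (2 * max 1 (‖x‖ ^ 2)) ^ n := by
            apply pow_le_pow_left₀ h1
            rcases le_total (‖x‖ ^ 2) 1 with h | h
            · rw [max_eq_left h]; nlinarith
            · rw [max_eq_right h]; nlinarith
        _ = (2:ℝ) ^ n * max 1 (‖x‖ ^ 2) ^ n := by rw [mul_pow]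
        _ ≤ (2:ℝ) ^ n * (1 + ‖x‖ ^ (2 * n)) := by
            apply mul_le_mul_of_nonneg_left _ (by positivity)
            rcases le_total (‖x‖ ^ 2) 1 with h | h
            · rw [max_eq_left h]
              simp only [one_pow]
              have : (0:ℝ) ≤ ‖x‖ ^ (2 * n) := by positivity
              linarith
            · rw [max_eq_right h, ← pow_mul]
              linarith
    rw [Real.norm_of_nonneg (by positivity)]
    calc (1 + ‖x‖ ^ 2) ^ σ * (2 : ℝ) ^ (2 * s * ∑ i, |x i|) * ‖ψ x‖ ^ 2
        ≤ (1 + ‖x‖ ^ 2) ^ σ * 1 * ‖ψ x‖ ^ 2 := by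
          apply mul_le_mul_of_nonneg_right _ (by positivity)
          exact mul_le_mul_of_nonneg_left hw (by positivity)
      _ = (1 + ‖x‖ ^ 2) ^ σ * ‖ψ x‖ ^ 2 := by ring
      _ ≤ ((2:ℝ) ^ n * (1 + ‖x‖ ^ (2 * n))) * (C * ‖ψ x‖) := by
          apply mul_le_mul hrn _ (by positivity) (by positivity)
          rw [sq]
          exact mul_le_mul_of_nonneg_right (hbd x) (hψ0 x)
      _ = (2 : ℝ) ^ n * C * (‖ψ x‖ + ‖x‖ ^ (2 * n) * ‖ψ x‖) := by ring

lemma main_bound_s2 {d : ℕ} (s σ c : ℝ) (hs : s ≤ 0) (hc : 0 ≤ c)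
    (φ : SchwartzMap (EuclideanSpace ℝ (Fin d)) ℂ)
    {μ : ℝ} (hμ0 : 0 < μ) (hμ1 : μ < 1)
    (hpt : ∀ t : ℝ, 0 ≤ t → (1 + μ ^ 2 * t) ^ σ ≤ c * (1 + t) ^ σ) :
    Enorm d (s / μ) σ (fun x => φ (μ • x)) ≤
      (c * μ ^ (-(d : ℝ))) ^ (1 / 2 : ℝ) * Enorm d s σ ⇑φ := by
  classical
  set E := EuclideanSpace ℝ (Fin d)
  set ψ : E → ℂ := 𝓕 ⇑φ with hψ
  set A : E → ℝ := fun ξ =>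
    (1 + ‖ξ‖ ^ 2) ^ σ * (2 : ℝ) ^ (2 * (s / μ) * ∑ i, |ξ i|) *
      ‖𝓕 (fun x => φ (μ • x)) ξ‖ ^ 2 with hA
  set G : E → ℝ := fun η =>
    (1 + ‖η‖ ^ 2) ^ σ * (2 : ℝ) ^ (2 * s * ∑ i, |η i|) * ‖ψ η‖ ^ 2 with hG
  have hA0 : ∀ ξ, 0 ≤ A ξ := fun ξ => by
    apply mul_nonneg (mul_nonneg (Real.rpow_nonneg (by positivity) _)
      (Real.rpow_nonneg (by norm_num) _)) (by positivity)
  have hG0 : ∀ η, 0 ≤ G η := fun η => by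
    apply mul_nonneg (mul_nonneg (Real.rpow_nonneg (by positivity) _)
      (Real.rpow_nonneg (by norm_num) _)) (by positivity)
  have hGint : Integrable G := by
    have := integrable_G s σ hs (SchwartzMap.fourierTransformCLM ℂ φ)
    simpa [SchwartzMap.fourierTransformCLM_apply, SchwartzMap.fourier_coe, hG, hψ] using this
  -- pointwise identity for A (μ • η)
  have hAs : ∀ η : E, A (μ • η) =
      (1 + μ ^ 2 * ‖η‖ ^ 2) ^ σ * (2 : ℝ) ^ (2 * s * ∑ i, |η i|) *
        (((μ ^ d)⁻¹) ^ 2 * ‖ψ η‖ ^ 2) := by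
    intro η
    have h1 : ‖μ • η‖ ^ 2 = μ ^ 2 * ‖η‖ ^ 2 := by
      rw [norm_smul, Real.norm_of_nonneg hμ0.le, mul_pow]
    have h2 : (∑ i, |(μ • η) i|) = μ * ∑ i, |η i| := by
      rw [Finset.mul_sum]
      congr 1; ext i
      rw [PiLp.smul_apply, smul_eq_mul, abs_mul, abs_of_pos hμ0]
    have h3 : 𝓕 (fun x => (φ : E → ℂ) (μ • x)) (μ • η) = ((μ ^ d)⁻¹ : ℝ) • ψ η := by
      rw [ft_dilate _ hμ0, inv_smul_smul₀ hμ0.ne']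
    rw [hA]
    simp only [h1, h2, h3]
    rw [norm_smul, mul_pow, Real.norm_of_nonneg (by positivity)]
    congr 2
    · congr 1
      field_simp
  -- pointwise bound
  have hptA : ∀ η : E, A (μ • η) ≤ (c * ((μ ^ d)⁻¹) ^ 2) * G η := by
    intro η
    rw [hAs η, hG]
    have h := hpt (‖η‖ ^ 2) (by positivity)
    have hw0 : (0:ℝ) ≤ (2 : ℝ) ^ (2 * s * ∑ i, |η i|) := Real.rpow_nonneg (by norm_num) _
    calc (1 + μ ^ 2 * ‖η‖ ^ 2) ^ σ * (2 : ℝ) ^ (2 * s * ∑ i, |η i|) *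
          (((μ ^ d)⁻¹) ^ 2 * ‖ψ η‖ ^ 2)
        ≤ (c * (1 + ‖η‖ ^ 2) ^ σ) * (2 : ℝ) ^ (2 * s * ∑ i, |η i|) *
          (((μ ^ d)⁻¹) ^ 2 * ‖ψ η‖ ^ 2) := by
          apply mul_le_mul_of_nonneg_right (mul_le_mul_of_nonneg_right h hw0) (by positivity)
      _ = (c * ((μ ^ d)⁻¹) ^ 2) *
          ((1 + ‖η‖ ^ 2) ^ σ * (2 : ℝ) ^ (2 * s * ∑ i, |η i|) * ‖ψ η‖ ^ 2) := by ring
  -- change of variables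
  have hμd : (0:ℝ) < μ ^ d := by positivity
  have hcov : ∫ ξ, A ξ = μ ^ d * ∫ η, A (μ • η) := by
    rw [Measure.integral_comp_smul_of_nonneg volume A μ (hR := hμ0.le),
      finrank_euclideanSpace, Fintype.card_fin, smul_eq_mul]
    field_simp
  have hmono : ∫ η, A (μ • η) ≤ (c * ((μ ^ d)⁻¹) ^ 2) * ∫ η, G η := by
    rw [← integral_const_mul]
    exact integral_mono_of_nonneg (Filter.Eventually.of_forall fun η => hA0 _)
      (hGint.const_mul _) (Filter.Eventually.of_forall hptA)
  have hGint0 : 0 ≤ ∫ η, G η := integral_nonneg hG0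
  have hAint0 : 0 ≤ ∫ η, A (μ • η) := integral_nonneg fun η => hA0 _
  have key : ∫ ξ, A ξ ≤ (c * μ ^ (-(d:ℝ))) * ∫ η, G η := by
    rw [hcov]
    calc μ ^ d * ∫ η, A (μ • η) ≤ μ ^ d * ((c * ((μ ^ d)⁻¹) ^ 2) * ∫ η, G η) :=
          mul_le_mul_of_nonneg_left hmono hμd.le
      _ = (c * μ ^ (-(d:ℝ))) * ∫ η, G η := by
          rw [Real.rpow_neg hμ0.le, Real.rpow_natCast]
          field_simp
  -- conclude
  have hcμ : (0:ℝ) ≤ c * μ ^ (-(d:ℝ)) := mul_nonneg hc (Real.rpow_nonneg hμ0.le _)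
  show (∫ ξ, A ξ) ^ (1/2 : ℝ) ≤ (c * μ ^ (-(d:ℝ))) ^ (1/2 : ℝ) * (∫ η, G η) ^ (1/2 : ℝ)
  rw [← Real.mul_rpow hcμ hGint0]
  exact Real.rpow_le_rpow (integral_nonneg hA0) key (by norm_num)

/-- Scaling estimate for `D_μφ(x) = φ(μx)`, `0 < μ < 1`, for Schwartz `φ`:
if `σ ≤ 0` then `‖D_μφ‖_{E^{s/μ}_σ} ≤ μ^{-d/2+σ} ‖φ‖_{E^s_σ}`, and if `σ > 0` then
`‖D_μφ‖_{E^{s/μ}_σ} ≤ μ^{-d/2} ‖φ‖_{E^s_σ}`. -/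
theorem stmt_2 (d : ℕ) (hd : 1 ≤ d) (s σ : ℝ) (hs : s ≤ 0)
    (φ : SchwartzMap (EuclideanSpace ℝ (Fin d)) ℂ)
    (μ : ℝ) (hμ0 : 0 < μ) (hμ1 : μ < 1) :
    (σ ≤ 0 → Enorm d (s / μ) σ (fun x => φ (μ • x)) ≤
      μ ^ (-(d : ℝ) / 2 + σ) * Enorm d s σ ⇑φ) ∧
    (0 < σ → Enorm d (s / μ) σ (fun x => φ (μ • x)) ≤
      μ ^ (-(d : ℝ) / 2) * Enorm d s σ ⇑φ) := by
  have hμ2 : μ ^ 2 ≤ 1 := by nlinarith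
  constructor
  · intro hσ
    have hpt : ∀ t : ℝ, 0 ≤ t → (1 + μ ^ 2 * t) ^ σ ≤ μ ^ (2 * σ) * (1 + t) ^ σ := by
      intro t ht
      have h1 : μ ^ (2 * σ) * (1 + t) ^ σ = (μ ^ 2 * (1 + t)) ^ σ := by
        rw [Real.mul_rpow (by positivity) (by positivity)]
        congr 1
        rw [← Real.rpow_natCast μ 2, ← Real.rpow_mul hμ0.le]
        norm_num
      rw [h1]
      apply Real.rpow_le_rpow_of_nonpos (by positivity) _ hσ
      nlinarith
    have h := main_bound_s2 s σ (μ ^ (2 * σ)) hs (Real.rpow_nonneg hμ0.le _) φ hμ0 hμ1 hpt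
    have hconst : (μ ^ (2 * σ) * μ ^ (-(d : ℝ))) ^ (1 / 2 : ℝ) = μ ^ (-(d : ℝ) / 2 + σ) := by
      rw [← Real.rpow_add hμ0, ← Real.rpow_mul hμ0.le]
      congr 1
      ring
    rwa [hconst] at h
  · intro hσ
    have hpt : ∀ t : ℝ, 0 ≤ t → (1 + μ ^ 2 * t) ^ σ ≤ 1 * (1 + t) ^ σ := by
      intro t ht
      rw [one_mul]
      apply Real.rpow_le_rpow (by positivity) (by nlinarith) hσ.le
    have h := main_bound_s2 s σ 1 hs zero_le_one φ hμ0 hμ1 hpt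
    have hconst : ((1 : ℝ) * μ ^ (-(d : ℝ))) ^ (1 / 2 : ℝ) = μ ^ (-(d : ℝ) / 2) := by
      rw [one_mul, ← Real.rpow_mul hμ0.le]
      congr 1
      ring
    rwa [hconst] at h
end

section
/- Let α ∈ ℝ and let u : ℝ → 𝒮(ℝ;ℂ) be a continuously differentiable curve in the Schwartz space, written u(t,x), which solves the nonlocal derivative NLS: for all (t,x), i∂ₜu(t,x) + ∂ₓ²u(t,x) + α u(t,x) u*(t,x) ∂ₓu(t,x) = 0, where u*(t,x) := conj(u(t,−x)). Then for all (t,x), ∂ₜ(u u*)(t,x) = i ∂ₓ[ ∂ₓu · u* − ∂ₓ(u*) · u + (α/2)(u u*)² ](t,x). -/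
open MeasureTheory

/-- If `u(t,·)` is a continuously differentiable curve of Schwartz functions (with time
derivative `ut`) solving the nonlocal derivative NLS `i uₜ + ∂ₓ²u + α u u* ∂ₓu = 0`, where
`u*(t,x) = conj(u(t,−x))`, then
`∂ₜ(u u*) = i ∂ₓ[∂ₓu · u* − ∂ₓ(u*) · u + (α/2)(u u*)²]`. -/
theorem stmt_7 (α : ℝ) (u ut : ℝ → SchwartzMap ℝ ℂ)
    (hu : Continuous u) (hut : Continuous ut)
    (hderiv : ∀ t x : ℝ, HasDerivAt (fun τ => u τ x) (ut t x) t)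
    (heq : ∀ t x : ℝ,
      Complex.I * ut t x + deriv (deriv (fun y => u t y)) x
        + (α : ℂ) * u t x * (starRingEnd ℂ) (u t (-x)) * deriv (fun y => u t y) x = 0) :
    ∀ t x : ℝ,
      deriv (fun τ => u τ x * (starRingEnd ℂ) (u τ (-x))) t
        = Complex.I * deriv (fun y =>
            deriv (fun z => u t z) y * (starRingEnd ℂ) (u t (-y))
              - deriv (fun z => (starRingEnd ℂ) (u t (-z))) y * u t y
              + (α / 2 : ℂ) * (u t y * (starRingEnd ℂ) (u t (-y))) ^ 2) x := by
  intro t x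
  set f := u t with hf
  set g := SchwartzMap.derivCLM ℝ ℂ f with hg
  set h := SchwartzMap.derivCLM ℝ ℂ g with hh
  have Ed1 : deriv (⇑f) = ⇑g := by
    funext y; rw [hg, SchwartzMap.derivCLM_apply]
  have Ed2 : deriv (⇑g) = ⇑h := by
    funext y; rw [hh, SchwartzMap.derivCLM_apply]
  have hfd : ∀ (p : SchwartzMap ℝ ℂ) (y : ℝ), HasDerivAt (⇑p) (deriv (⇑p) y) y :=
    fun p y => (p.differentiable.differentiableAt).hasDerivAt
  have Hw : ∀ y : ℝ, HasDerivAt (fun z => (starRingEnd ℂ) (f (-z)))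
      (-(starRingEnd ℂ) (g (-y))) y := by
    intro y
    have h2 : HasDerivAt (⇑f) (g (-y)) (-y) := by have := hfd f (-y); rwa [Ed1] at this
    have h3 := HasDerivAt.scomp y h2 (hasDerivAt_neg y)
    have h4 : HasDerivAt (fun z => f (-z)) (-(g (-y))) y := by simpa [Function.comp_def] using h3
    have h5 := h4.star
    simpa [Complex.star_def] using h5
  have Hw' : ∀ y : ℝ, HasDerivAt (fun z => -(starRingEnd ℂ) (g (-z)))
      ((starRingEnd ℂ) (h (-y))) y := by
    intro y
    have h2 : HasDerivAt (⇑g) (h (-y)) (-y) := by have := hfd g (-y); rwa [Ed2] at this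
    have h3 := HasDerivAt.scomp y h2 (hasDerivAt_neg y)
    have h4 : HasDerivAt (fun z => g (-z)) (-(h (-y))) y := by simpa [Function.comp_def] using h3
    have h5 := h4.star.neg
    simpa [Complex.star_def, Pi.neg_def] using h5
  have H1 := heq t x
  have H2 := heq t (-x)
  rw [Ed1, Ed2] at H1 H2
  simp only [neg_neg] at H2
  have hut1 : ut t x = Complex.I * h x
      + Complex.I * ((α : ℂ) * f x * (starRingEnd ℂ) (f (-x)) * g x) := by
    linear_combination (-Complex.I) * H1 + (ut t x) * Complex.I_mul_I
  have hut2 : ut t (-x) = Complex.I * h (-x)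
      + Complex.I * ((α : ℂ) * f (-x) * (starRingEnd ℂ) (f x) * g (-x)) := by
    linear_combination (-Complex.I) * H2 + (ut t (-x)) * Complex.I_mul_I
  have HL : HasDerivAt (fun τ => u τ x * (starRingEnd ℂ) (u τ (-x)))
      (ut t x * (starRingEnd ℂ) (u t (-x)) + u t x * (starRingEnd ℂ) (ut t (-x))) t := by
    have := (hderiv t x).mul ((hderiv t (-x)).star)
    simpa [Complex.star_def, Pi.mul_def] using this
  have HBfun : (fun y => deriv (fun z => f z) y * (starRingEnd ℂ) (f (-y))
        - deriv (fun z => (starRingEnd ℂ) (f (-z))) y * f y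
        + (α / 2 : ℂ) * (f y * (starRingEnd ℂ) (f (-y))) ^ 2)
      = (fun y => g y * (starRingEnd ℂ) (f (-y))
        - -(starRingEnd ℂ) (g (-y)) * f y
        + (α / 2 : ℂ) * (f y * (starRingEnd ℂ) (f (-y))) ^ 2) := by
    funext y
    rw [Ed1, (Hw y).deriv]
  have hgx : HasDerivAt (⇑g) (h x) x := by have := hfd g x; rwa [Ed2] at this
  have hfx : HasDerivAt (⇑f) (g x) x := by have := hfd f x; rwa [Ed1] at this
  have Hp : HasDerivAt (fun y => (f y * (starRingEnd ℂ) (f (-y))) ^ 2)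
      ((g x * (starRingEnd ℂ) (f (-x)) + f x * -(starRingEnd ℂ) (g (-x)))
          * (f x * (starRingEnd ℂ) (f (-x)))
        + (f x * (starRingEnd ℂ) (f (-x)))
          * (g x * (starRingEnd ℂ) (f (-x)) + f x * -(starRingEnd ℂ) (g (-x)))) x := by
    have Hq := (hfx.mul (Hw x)).mul (hfx.mul (Hw x))
    simpa [← pow_two, Pi.mul_def, Pi.pow_def] using Hq
  have Hc := Hp.const_mul ((α / 2 : ℂ))
  have HG := ((hgx.mul (Hw x)).sub ((Hw' x).mul hfx)).add Hc
  simp only [Pi.mul_def, Pi.sub_def, Pi.add_def] at HG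
  rw [HL.deriv, hut1, hut2, HBfun, HG.deriv]
  simp only [map_add, map_mul, Complex.conj_I, Complex.conj_ofReal, Complex.conj_conj]
  ring
end

section
/- Let σ > 0. There exists a constant C = C(σ) > 0 such that for all measurable functions f, g : ℝ → ℂ supported in [0, ∞) with ⟨·⟩^σ f and ⟨·⟩^σ g in L²(ℝ), one has for every ξ ∈ ℝ: |ξ|^σ |(f * g)(ξ)| ≤ C ( ‖⟨·⟩^σ f‖_{L²} ‖g‖_{L²} + ‖f‖_{L²} ‖⟨·⟩^σ g‖_{L²} ). -/
open MeasureTheory Real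

/-- Convolution of two functions on `ℝ`. -/
noncomputable def conv (f g : ℝ → ℂ) (x : ℝ) : ℂ := ∫ y : ℝ, f y * g (x - y)

/-- Product of norms of two L² functions is integrable. -/
lemma aux_int_mul {F G : ℝ → ℂ} (hF : MemLp F 2 (volume : Measure ℝ))
    (hG : MemLp G 2 (volume : Measure ℝ)) :
    Integrable (fun y => ‖F y‖ * ‖G y‖) volume := by
  have h1 : Integrable (fun y => ‖F y‖ ^ 2) volume := hF.norm.integrable_sq
  have h2 : Integrable (fun y => ‖G y‖ ^ 2) volume := hG.norm.integrable_sq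
  refine Integrable.mono' ((h1.add h2).div_const 2) (hF.1.norm.mul hG.1.norm) ?_
  filter_upwards with y
  have := sq_nonneg (‖F y‖ - ‖G y‖)
  rw [Real.norm_of_nonneg (by positivity)]
  simp only [Pi.add_apply]
  nlinarith

/-- Weighted convolution bound: for `σ > 0` there is `C > 0` such that for all measurable
`f, g` supported in `[0,∞)` with `⟨·⟩^σ f, ⟨·⟩^σ g ∈ L²`, one has for every `ξ`:
`|ξ|^σ |(f*g)(ξ)| ≤ C (‖⟨·⟩^σ f‖_{L²} ‖g‖_{L²} + ‖f‖_{L²} ‖⟨·⟩^σ g‖_{L²})`,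
where `⟨ξ⟩^σ = (1+ξ²)^{σ/2}`. -/
theorem stmt_13 (σ : ℝ) (hσ : 0 < σ) :
    ∃ C > 0, ∀ f g : ℝ → ℂ, Measurable f → Measurable g →
      Function.support f ⊆ Set.Ici 0 → Function.support g ⊆ Set.Ici 0 →
      MemLp (fun ξ : ℝ => (((1 + ξ ^ 2) ^ (σ / 2) : ℝ) : ℂ) * f ξ) 2 volume →
      MemLp (fun ξ : ℝ => (((1 + ξ ^ 2) ^ (σ / 2) : ℝ) : ℂ) * g ξ) 2 volume →
      ∀ ξ : ℝ, |ξ| ^ σ * ‖conv f g ξ‖ ≤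
        C * ((∫ η : ℝ, ‖(((1 + η ^ 2) ^ (σ / 2) : ℝ) : ℂ) * f η‖ ^ 2) ^ (1 / 2 : ℝ)
                * (∫ η : ℝ, ‖g η‖ ^ 2) ^ (1 / 2 : ℝ)
              + (∫ η : ℝ, ‖f η‖ ^ 2) ^ (1 / 2 : ℝ)
                * (∫ η : ℝ, ‖(((1 + η ^ 2) ^ (σ / 2) : ℝ) : ℂ) * g η‖ ^ 2) ^ (1 / 2 : ℝ)) := by
  set w : ℝ → ℝ := fun t => (1 + t ^ 2) ^ (σ / 2) with hw
  have hw_pos : ∀ t, 0 < w t := fun t => Real.rpow_pos_of_pos (by nlinarith [sq_nonneg t]) _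
  have hw_one : ∀ t, 1 ≤ w t := fun t =>
    Real.one_le_rpow (by nlinarith [sq_nonneg t]) (by positivity)
  -- t^σ ≤ w t for t ≥ 0
  have hw_ge : ∀ t : ℝ, 0 ≤ t → t ^ σ ≤ w t := by
    intro t ht
    have h1 : t ^ σ = (t ^ 2) ^ (σ / 2) := by
      rw [← Real.rpow_natCast t 2, ← Real.rpow_mul ht]
      congr 1
      push_cast
      ring
    rw [h1]
    exact Real.rpow_le_rpow (by positivity) (by nlinarith) (by positivity)
  refine ⟨2 ^ σ, Real.rpow_pos_of_pos two_pos σ, ?_⟩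
  intro f g hfm hgm hsf hsg hF hG ξ
  set F : ℝ → ℂ := fun t => ((w t : ℝ) : ℂ) * f t with hFdef
  set G : ℝ → ℂ := fun t => ((w t : ℝ) : ℂ) * g t with hGdef
  have hnF : ∀ t, ‖F t‖ = w t * ‖f t‖ := fun t => by
    rw [hFdef]; simp [Complex.norm_real, abs_of_pos (hw_pos t)]
  have hnG : ∀ t, ‖G t‖ = w t * ‖g t‖ := fun t => by
    rw [hGdef]; simp [Complex.norm_real, abs_of_pos (hw_pos t)]
  -- f, g themselves are in L²
  have hf2 : MemLp f 2 (volume : Measure ℝ) := by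
    refine hF.of_le hfm.aestronglyMeasurable ?_
    filter_upwards with t
    rw [hnF t]
    nlinarith [hw_one t, norm_nonneg (f t)]
  have hg2 : MemLp g 2 (volume : Measure ℝ) := by
    refine hG.of_le hgm.aestronglyMeasurable ?_
    filter_upwards with t
    rw [hnG t]
    nlinarith [hw_one t, norm_nonneg (g t)]
  have hmp : MeasurePreserving (fun y : ℝ => ξ - y) volume volume :=
    Measure.measurePreserving_sub_left volume ξ
  have hgs : MemLp (fun y => g (ξ - y)) 2 (volume : Measure ℝ) := hg2.comp_measurePreserving hmp
  have hGs : MemLp (fun y => G (ξ - y)) 2 (volume : Measure ℝ) := hG.comp_measurePreserving hmp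
  -- pointwise bound
  have pt : ∀ y : ℝ, |ξ| ^ σ * ‖f y * g (ξ - y)‖ ≤
      2 ^ σ * (‖F y‖ * ‖g (ξ - y)‖ + ‖f y‖ * ‖G (ξ - y)‖) := by
    intro y
    rcases eq_or_ne (f y) 0 with h0 | h0
    · simp [h0]
      positivity
    rcases eq_or_ne (g (ξ - y)) 0 with h1 | h1
    · simp [h1]
      positivity
    have hy : 0 ≤ y := hsf (Function.mem_support.2 h0)
    have hz : 0 ≤ ξ - y := hsg (Function.mem_support.2 h1)
    have hξ : 0 ≤ ξ := by linarith
    rw [abs_of_nonneg hξ, norm_mul, hnF, hnG]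
    have hmax : ξ ^ σ ≤ 2 ^ σ * max y (ξ - y) ^ σ := by
      rw [← Real.mul_rpow (by norm_num) (le_max_iff.2 (Or.inl hy))]
      exact Real.rpow_le_rpow hξ (by rcases le_total y (ξ - y) with h | h <;>
        [rw [max_eq_right h]; rw [max_eq_left h]] <;> linarith) hσ.le
    rcases le_total y (ξ - y) with h | h
    · rw [max_eq_right h] at hmax
      have h2 : ξ ^ σ ≤ 2 ^ σ * w (ξ - y) :=
        hmax.trans (by nlinarith [hw_ge (ξ - y) hz, Real.rpow_pos_of_pos (two_pos (α := ℝ)) σ])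
      nlinarith [norm_nonneg (f y), norm_nonneg (g (ξ - y)), hw_pos y, hw_pos (ξ - y),
        mul_nonneg (mul_nonneg (hw_pos y).le (norm_nonneg (f y))) (norm_nonneg (g (ξ - y))),
        mul_le_mul_of_nonneg_right h2
          (mul_nonneg (norm_nonneg (f y)) (norm_nonneg (g (ξ - y)))),
        Real.rpow_pos_of_pos (two_pos (α := ℝ)) σ]
    · rw [max_eq_left h] at hmax
      have h2 : ξ ^ σ ≤ 2 ^ σ * w y :=
        hmax.trans (by nlinarith [hw_ge y hy, Real.rpow_pos_of_pos (two_pos (α := ℝ)) σ])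
      nlinarith [norm_nonneg (f y), norm_nonneg (g (ξ - y)), hw_pos y, hw_pos (ξ - y),
        mul_nonneg (norm_nonneg (f y))
          (mul_nonneg (hw_pos (ξ - y)).le (norm_nonneg (g (ξ - y)))),
        mul_le_mul_of_nonneg_right h2
          (mul_nonneg (norm_nonneg (f y)) (norm_nonneg (g (ξ - y)))),
        Real.rpow_pos_of_pos (two_pos (α := ℝ)) σ]
  have intA : Integrable (fun y => ‖F y‖ * ‖g (ξ - y)‖) volume := aux_int_mul hF hgs
  have intB : Integrable (fun y => ‖f y‖ * ‖G (ξ - y)‖) volume := aux_int_mul hf2 hGs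
  have hpq : (2 : ℝ).HolderConjugate 2 := Real.HolderConjugate.two_two
  -- Cauchy-Schwarz for the two pieces
  have CS1 : ∫ y, ‖F y‖ * ‖g (ξ - y)‖ ≤
      (∫ η, ‖F η‖ ^ (2:ℝ)) ^ (1/2 : ℝ) * (∫ η, ‖g η‖ ^ (2:ℝ)) ^ (1/2 : ℝ) := by
    have := integral_mul_norm_le_Lp_mul_Lq (μ := volume) hpq
      (by simpa using hF) (by simpa using hgs)
    rwa [integral_sub_left_eq_self (fun t => ‖g t‖ ^ (2:ℝ)) volume ξ] at this
  have CS2 : ∫ y, ‖f y‖ * ‖G (ξ - y)‖ ≤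
      (∫ η, ‖f η‖ ^ (2:ℝ)) ^ (1/2 : ℝ) * (∫ η, ‖G η‖ ^ (2:ℝ)) ^ (1/2 : ℝ) := by
    have := integral_mul_norm_le_Lp_mul_Lq (μ := volume) hpq
      (by simpa using hf2) (by simpa using hGs)
    rwa [integral_sub_left_eq_self (fun t => ‖G t‖ ^ (2:ℝ)) volume ξ] at this
  have hrw : ∀ h : ℝ → ℂ, (∫ η, ‖h η‖ ^ (2:ℝ)) = ∫ η, ‖h η‖ ^ (2:ℕ) := by
    intro h
    refine integral_congr_ae (Filter.Eventually.of_forall fun η => ?_)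
    show ‖h η‖ ^ (2:ℝ) = ‖h η‖ ^ (2:ℕ)
    rw [show ((2:ℝ)) = ((2:ℕ):ℝ) by norm_num, Real.rpow_natCast]
  rw [hrw F, hrw g] at CS1
  rw [hrw f, hrw G] at CS2
  calc |ξ| ^ σ * ‖conv f g ξ‖
      ≤ |ξ| ^ σ * ∫ y, ‖f y * g (ξ - y)‖ := by
        exact mul_le_mul_of_nonneg_left (norm_integral_le_integral_norm _) (by positivity)
    _ = ∫ y, |ξ| ^ σ * ‖f y * g (ξ - y)‖ := (integral_const_mul _ _).symm
    _ ≤ ∫ y, 2 ^ σ * (‖F y‖ * ‖g (ξ - y)‖ + ‖f y‖ * ‖G (ξ - y)‖) := by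
        refine integral_mono_of_nonneg (Filter.Eventually.of_forall fun y => by positivity)
          (((intA.add intB).const_mul _)) (Filter.Eventually.of_forall pt)
    _ = 2 ^ σ * ((∫ y, ‖F y‖ * ‖g (ξ - y)‖) + ∫ y, ‖f y‖ * ‖G (ξ - y)‖) := by
        rw [integral_const_mul, integral_add intA intB]
    _ ≤ 2 ^ σ * ((∫ η, ‖F η‖ ^ 2) ^ (1/2 : ℝ) * (∫ η, ‖g η‖ ^ 2) ^ (1/2 : ℝ)
          + (∫ η, ‖f η‖ ^ 2) ^ (1/2 : ℝ) * (∫ η, ‖G η‖ ^ 2) ^ (1/2 : ℝ)) := by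
        exact mul_le_mul_of_nonneg_left (add_le_add CS1 CS2) (by positivity)
end
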